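/- For every integer m ≥ 7 with m ≡ 3 (mod 4) there exists a binary projective three-weight linear code C_2 of length n = 2^{m−2} + 2^{(m−3)/2}, dimension m and minimum distance 2^{m−3} with A_n(C_2) = 1. -/

import Mathlib

/-- Hamming weight of a binary vector: the number of nonzero coordinates. -/
noncomputable def wt {ι : Type*} (c : ι → ZMod 2) : ℕ := Nat.card {i : ι // c i ≠ 0}

/-- Number of codewords of Hamming weight `w` in a set of binary vectors. -/
noncomputable def weightCount {ι : Type*} (C : Set (ι → ZMod 2)) (w : ℕ) : ℕ :=
  Nat.card {c : ι → ZMod 2 // c ∈ C ∧ wt c = w}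

/-- The dual code: all vectors orthogonal (standard inner product) to every codeword. -/
def dualCode {ι : Type*} (C : Set (ι → ZMod 2)) : Set (ι → ZMod 2) :=
  {x | ∀ c ∈ C, ∑ᶠ i, x i * c i = 0}

/-- A code is projective if the minimum distance of its dual is at least 3. -/
def IsProjective {ι : Type*} (C : Set (ι → ZMod 2)) : Prop :=
  ∀ x ∈ dualCode C, x ≠ 0 → 3 ≤ wt x

/-- `d` is the minimum distance of `C`: the least Hamming weight of a nonzero codeword. -/
def IsMinDist {ι : Type*} (C : Set (ι → ZMod 2)) (d : ℕ) : Prop :=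
  (∃ c ∈ C, c ≠ 0 ∧ wt c = d) ∧ ∀ c ∈ C, c ≠ 0 → d ≤ wt c

/-- The number of nonzero Hamming weights occurring among codewords of `C`. -/
noncomputable def numNonzeroWeights {ι : Type*} (C : Set (ι → ZMod 2)) : ℕ :=
  Nat.card {i : ℕ | 1 ≤ i ∧ weightCount C i ≠ 0}

/-- The codewords of weight `w` in `C` hold a 2-design with index `lam`: every pair of
distinct coordinate positions lies in the support of exactly `lam` codewords of weight `w`. -/
def HoldsTwoDesign {ι : Type*} (C : Set (ι → ZMod 2)) (w lam : ℕ) : Prop :=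
  ∀ p q : ι, p ≠ q →
    Nat.card {c : ι → ZMod 2 // c ∈ C ∧ wt c = w ∧ c p ≠ 0 ∧ c q ≠ 0} = lam


abbrev P2 := ZMod 2 × ZMod 2

def Qf {t : ℕ} (z : Fin t → P2) : ZMod 2 := ∑ i, (z i).1 * (z i).2
def ip {t : ℕ} (x z : Fin t → P2) : ZMod 2 := ∑ i, ((x i).1 * (z i).1 + (x i).2 * (z i).2)

def cnt (t : ℕ) (x : Fin t → P2) (e b : ZMod 2) : ℕ :=
  Fintype.card {z : Fin t → P2 // Qf z = e ∧ ip x z = b}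

def tgt (t : ℕ) (x : Fin t → P2) (e b : ZMod 2) : ℕ :=
  if x = 0 then (if b = 0 then (if e = 0 then 2^(2*t-1)+2^(t-1) else 2^(2*t-1)-2^(t-1)) else 0)
  else if b = Qf x then (if e = 0 then 2^(2*t-2)+2^(t-1) else 2^(2*t-2)-2^(t-1)) else 2^(2*t-2)

lemma zmod2_shift : ∀ (a q e : ZMod 2), (a + q = e ↔ q = e + a) := by decide
lemma zmod2_cancel : ∀ (a e : ZMod 2), a + (e + a) = e := by decide
lemma zmod2_cases : ∀ a : ZMod 2, a = 0 ∨ a = 1 := by decide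
lemma zmod2_ne0 : ∀ a : ZMod 2, a ≠ 0 ↔ a = 1 := by decide
lemma zmod2_shift1 : ∀ a β : ZMod 2, a + β = 1 → a = 1 + β := by decide
lemma zmod2_nz : ∀ β c : ZMod 2, (β + 1 + c) + c + β ≠ 0 := by decide
lemma zmod2_w1 : ∀ q i : ZMod 2, q + i + 1 + i ≠ q := by decide
lemma zmod2_w2 : ∀ q i : ZMod 2, q + i + 1 + 1 + i = q := by decide
lemma zmod2_eq_of_add : ∀ a b : ZMod 2, a + b = 0 → a = b := by decide

lemma Qf_succ {t : ℕ} (z : Fin (t+1) → P2) : Qf z = (z 0).1 * (z 0).2 + Qf (Fin.tail z) := by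
  simp [Qf, Fin.sum_univ_succ, Fin.tail]

lemma ip_succ {t : ℕ} (x z : Fin (t+1) → P2) :
    ip x z = ((x 0).1 * (z 0).1 + (x 0).2 * (z 0).2) + ip (Fin.tail x) (Fin.tail z) := by
  simp [ip, Fin.sum_univ_succ, Fin.tail]

lemma Qf_zero {t : ℕ} : Qf (0 : Fin t → P2) = 0 := by simp [Qf]

lemma sum_P2 (F : P2 → ℕ) : ∑ w, F w = F (0,0) + F (0,1) + F (1,0) + F (1,1) := by
  have h : (Finset.univ : Finset P2) = {(0,0),(0,1),(1,0),(1,1)} := by decide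
  rw [h]
  rw [show ({(0,0),(0,1),(1,0),(1,1)} : Finset P2)
      = insert (0,0) (insert (0,1) (insert (1,0) {(1,1)})) from rfl]
  rw [Finset.sum_insert (by decide), Finset.sum_insert (by decide),
      Finset.sum_insert (by decide), Finset.sum_singleton]
  ring

lemma fun_zero_iff {t : ℕ} (x : Fin (t+1) → P2) :
    x = 0 ↔ (x 0 = 0 ∧ Fin.tail x = 0) := by
  constructor
  · rintro rfl; exact ⟨rfl, rfl⟩
  · rintro ⟨h0, ht⟩
    funext i
    cases i using Fin.cases with
    | zero => exact h0
    | succ j => exact congrFun ht j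

lemma cnt_succ (t : ℕ) (x : Fin (t+1) → P2) (e b : ZMod 2) :
    cnt (t+1) x e b = ∑ w : P2, cnt t (Fin.tail x)
      (e + w.1 * w.2) (b + ((x 0).1 * w.1 + (x 0).2 * w.2)) := by
  classical
  simp only [cnt, Fintype.card_subtype]
  rw [Finset.card_eq_sum_card_fiberwise (f := fun z => z 0) (t := Finset.univ)
    (by intro z _; exact Finset.mem_univ _)]
  apply Finset.sum_congr rfl
  intro w _
  apply Finset.card_nbij' (i := fun z => Fin.tail z) (j := fun z' => Fin.cons w z')
  · intro z hz
    simp only [Finset.mem_coe, Finset.mem_filter, Finset.mem_univ, true_and] at hz ⊢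
    obtain ⟨⟨h1, h2⟩, h0⟩ := hz
    rw [Qf_succ, zmod2_shift] at h1
    rw [ip_succ, zmod2_shift] at h2
    rw [h1, h2, h0]
    exact ⟨rfl, rfl⟩
  · intro z' hz'
    simp only [Finset.mem_coe, Finset.mem_filter, Finset.mem_univ, true_and] at hz' ⊢
    obtain ⟨h1, h2⟩ := hz'
    refine ⟨⟨?_, ?_⟩, by simp⟩
    · rw [Qf_succ]
      simp only [Fin.cons_zero, Fin.tail_cons, h1]
      exact zmod2_cancel _ _
    · rw [ip_succ]
      simp only [Fin.cons_zero, Fin.tail_cons, h2]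
      exact zmod2_cancel _ _
  · intro z hz
    simp only [Finset.mem_coe, Finset.mem_filter] at hz
    rw [← hz.2]; exact Fin.cons_self_tail z
  · intro z' _; simp
lemma cnt_formula : ∀ t, 1 ≤ t → ∀ (x : Fin t → P2) (e b : ZMod 2), cnt t x e b = tgt t x e b := by
  intro t
  induction t with
  | zero => omega
  | succ t IH =>
    intro _ x e b
    rcases Nat.eq_or_lt_of_le (Nat.one_le_iff_ne_zero.mpr (Nat.succ_ne_zero t)) with h1 | h1
    · -- t + 1 = 1
      have ht0 : t = 0 := by omega
      subst ht0
      revert x e b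
      decide
    · have ht : 1 ≤ t := by omega
      rw [cnt_succ, sum_P2]
      simp only [IH ht]
      obtain ⟨u, rfl⟩ : ∃ u, t = u + 1 := ⟨t - 1, by omega⟩
      simp only [tgt, fun_zero_iff x, Qf_succ x]
      generalize Fin.tail x = y
      generalize x 0 = p
      have p1 : (2:ℕ)^(2*(u+1)-1) = 2*(2^u*2^u) := by
        rw [show 2*(u+1)-1 = (u+u)+1 from by omega, pow_succ, pow_add]; ring
      have p2 : (2:ℕ)^(2*(u+1)-2) = 2^u*2^u := by
        rw [show 2*(u+1)-2 = u+u from by omega, pow_add]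
      have p3 : (2:ℕ)^((u+1)-1) = 2^u := by norm_num
      have p4 : (2:ℕ)^(2*(u+1+1)-1) = 8*(2^u*2^u) := by
        rw [show 2*(u+1+1)-1 = (u+u)+3 from by omega, pow_add, pow_add]; ring
      have p5 : (2:ℕ)^(2*(u+1+1)-2) = 4*(2^u*2^u) := by
        rw [show 2*(u+1+1)-2 = (u+u)+2 from by omega, pow_add, pow_add]; ring
      have p6 : (2:ℕ)^((u+1+1)-1) = 2*2^u := by
        rw [show (u+1+1)-1 = u+1 from by omega, pow_succ]; ring
      rw [p1, p2, p3, p4, p5, p6]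
      have ha : 1 ≤ (2:ℕ)^u := Nat.one_le_two_pow
      have hA : (2:ℕ)^u ≤ 2^u*2^u := Nat.le_mul_of_pos_left _ ha
      obtain ⟨pa, pb⟩ := p
      rcases zmod2_cases pa with hpa | hpa <;> subst hpa <;>
      rcases zmod2_cases pb with hpb | hpb <;> subst hpb <;>
      rcases zmod2_cases e with he | he <;> subst he <;>
      rcases zmod2_cases b with hb | hb <;> subst hb <;>
      by_cases hy : y = 0 <;>
        first
          | (subst hy
             simp [Qf_zero, show (1+1 : ZMod 2) = 0 from rfl] <;> omega)
          | (rcases zmod2_cases (Qf y) with hq | hq <;>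
             simp [hy, hq, show (1+1 : ZMod 2) = 0 from rfl] <;> omega)

lemma cnt_val (u : ℕ) (x : Fin (u+1) → P2) (e b : ZMod 2) : cnt (u+1) x e b =
    if x = 0 then (if b = 0 then (if e = 0 then 2^(2*u+1)+2^u else 2^(2*u+1)-2^u) else 0)
    else if b = Qf x then (if e = 0 then 2^(2*u)+2^u else 2^(2*u)-2^u) else 2^(2*u) := by
  rw [cnt_formula (u+1) (by omega)]
  simp only [tgt, show 2*(u+1)-1 = 2*u+1 from by omega, show 2*(u+1)-2 = 2*u from by omega,
    show (u+1)-1 = u from by omega]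
lemma ip_zero_left {t : ℕ} (z : Fin t → P2) : ip 0 z = 0 := by simp [ip]

lemma ip_add_left {t : ℕ} (x y z : Fin t → P2) : ip (x + y) z = ip x z + ip y z := by
  simp only [ip, Pi.add_apply, Prod.fst_add, Prod.snd_add, add_mul, ← Finset.sum_add_distrib]
  apply Finset.sum_congr rfl; intros; ring

lemma ip_smul_left {t : ℕ} (r : ZMod 2) (x z : Fin t → P2) : ip (r • x) z = r * ip x z := by
  simp only [ip, Pi.smul_apply, Prod.smul_fst, Prod.smul_snd, smul_eq_mul, Finset.mul_sum]
  apply Finset.sum_congr rfl; intros; ring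

lemma ip_add_right {t : ℕ} (x y z : Fin t → P2) : ip x (y + z) = ip x y + ip x z := by
  simp only [ip, Pi.add_apply, Prod.fst_add, Prod.snd_add, mul_add, ← Finset.sum_add_distrib]
  apply Finset.sum_congr rfl; intros; ring

lemma addV {t : ℕ} (y : Fin t → P2) : y + y = 0 := by
  funext i
  show y i + y i = 0
  have : ∀ w : P2, w + w = 0 := by decide
  exact this _

lemma add_cancelV {t : ℕ} (a v : Fin t → P2) : a + v + v = a := by
  rw [add_assoc, addV, add_zero]

def v1 (u : ℕ) : Fin (u+1) → P2 := fun i => if i = 0 then (1,1) else 0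

lemma v1_ne_zero (u : ℕ) : v1 u ≠ 0 := by
  intro h
  have h0 := congrFun h 0
  rw [show v1 u 0 = (1,1) from if_pos rfl] at h0
  exact (by decide : ((1:ZMod 2),(1:ZMod 2)) ≠ 0) h0

def delta {u : ℕ} (j : Fin (u+1)) (w : P2) : Fin (u+1) → P2 := fun i => if i = j then w else 0

lemma ip_delta {u : ℕ} (j : Fin (u+1)) (w : P2) (z : Fin (u+1) → P2) :
    ip (delta j w) z = w.1 * (z j).1 + w.2 * (z j).2 := by
  rw [ip, Finset.sum_eq_single j]
  · simp [delta]
  · intro b _ hb; simp [delta, if_neg hb]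
  · intro h; exact absurd (Finset.mem_univ j) h

theorem master (u : ℕ) :
    ∃ C : Submodule (ZMod 2) (Fin (2 ^ (2*u+1) + 2 ^ u) → ZMod 2),
      Module.finrank (ZMod 2) C = 2*(u+1)+1 ∧
      IsMinDist (C : Set (Fin (2 ^ (2*u+1) + 2 ^ u) → ZMod 2)) (2 ^ (2*u)) ∧
      IsProjective (C : Set (Fin (2 ^ (2*u+1) + 2 ^ u) → ZMod 2)) ∧
      numNonzeroWeights (C : Set (Fin (2 ^ (2*u+1) + 2 ^ u) → ZMod 2)) = 3 ∧
      weightCount (C : Set (Fin (2 ^ (2*u+1) + 2 ^ u) → ZMod 2)) (2 ^ (2*u+1) + 2 ^ u) = 1 := by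
  classical
  set n : ℕ := 2 ^ (2*u+1) + 2 ^ u with hn
  have hp1 : 1 ≤ (2:ℕ)^u := Nat.one_le_two_pow
  have hp2 : 1 ≤ (2:ℕ)^(2*u) := Nat.one_le_two_pow
  have hp3 : (2:ℕ)^(2*u+1) = 2*2^(2*u) := by rw [pow_succ]; ring
  have hp4 : (2:ℕ)^u ≤ 2^(2*u) := Nat.pow_le_pow_right (by norm_num) (by omega)
  -- the defining set D and its enumeration
  have hDcard : Fintype.card {d : Fin (u+1) → P2 // Qf (d + v1 u) = 0} = n := by
    have h0 : cnt (u+1) 0 0 0 = n := by rw [cnt_val]; simp [hn]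
    rw [← h0, cnt]
    apply Fintype.card_congr
    refine ⟨fun d => ⟨d.1 + v1 u, ?_, ip_zero_left _⟩, fun z => ⟨z.1 + v1 u, ?_⟩, ?_, ?_⟩
    · exact d.2
    · rw [add_cancelV]; exact z.2.1
    · intro d; apply Subtype.ext; exact add_cancelV _ _
    · intro z; apply Subtype.ext; exact add_cancelV _ _
  let E : Fin n ≃ {d : Fin (u+1) → P2 // Qf (d + v1 u) = 0} :=
    (Fintype.equivFinOfCardEq hDcard).symm
  -- the code
  let φ : ((Fin (u+1) → P2) × ZMod 2) →ₗ[ZMod 2] (Fin n → ZMod 2) :=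
    { toFun := fun p => fun i => ip p.1 (E i).1 + p.2
      map_add' := by
        intro p q; funext i
        simp only [Pi.add_apply, Prod.fst_add, Prod.snd_add, ip_add_left]
        ring
      map_smul' := by
        intro r p; funext i
        simp only [Pi.smul_apply, Prod.smul_fst, Prod.smul_snd, smul_eq_mul,
          RingHom.id_apply, ip_smul_left]
        ring }
  have hφ0 : φ (0, 0) = 0 := by
    rw [show ((0,0) : (Fin (u+1) → P2) × ZMod 2) = 0 from rfl]
    exact map_zero φ
  have hφapp : ∀ p (i : Fin n), φ p i = ip p.1 (E i).1 + p.2 := fun p i => rfl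
  have hmem : ∀ p, φ p ∈ (↑(LinearMap.range φ) : Set (Fin n → ZMod 2)) := by
    intro p
    rw [SetLike.mem_coe]
    exact LinearMap.mem_range_self φ p
  have hmem' : ∀ c, c ∈ (↑(LinearMap.range φ) : Set (Fin n → ZMod 2)) → ∃ x β, c = φ (x, β) := by
    intro c hc
    rw [SetLike.mem_coe, LinearMap.mem_range] at hc
    obtain ⟨⟨x, β⟩, h⟩ := hc
    exact ⟨x, β, h.symm⟩
  -- weight formula
  have wt_phi : ∀ x β, wt (φ (x, β)) = cnt (u+1) x 0 (β + 1 + ip x (v1 u)) := by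
    intro x β
    rw [wt, cnt, Nat.card_eq_fintype_card]
    apply Fintype.card_congr
    refine ⟨fun i => ⟨(E i.1).1 + v1 u, (E i.1).2, ?_⟩,
            fun z => ⟨E.symm ⟨z.1 + v1 u, by rw [add_cancelV]; exact z.2.1⟩, ?_⟩, ?_, ?_⟩
    · rw [ip_add_right]
      have h1 : ip x (E i.1).1 + β ≠ 0 := by rw [← hφapp (x, β) i.1]; exact i.2
      rw [zmod2_ne0] at h1
      rw [zmod2_shift1 _ _ h1]
      ring
    · rw [hφapp]
      rw [Equiv.apply_symm_apply]
      rw [ip_add_right, z.2.2]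
      exact zmod2_nz β (ip x (v1 u))
    · intro i
      apply Subtype.ext
      rw [Equiv.symm_apply_eq]
      exact Subtype.ext (add_cancelV _ _)
    · intro z
      apply Subtype.ext
      show (E (E.symm ⟨z.1 + v1 u, _⟩)).1 + v1 u = z.1
      rw [Equiv.apply_symm_apply]
      exact add_cancelV _ _
  have wt_zero : wt (0 : Fin n → ZMod 2) = 0 := by
    rw [wt, Nat.card_eq_fintype_card, Fintype.card_eq_zero_iff]
    exact ⟨fun i => i.2 rfl⟩
  have wt_n : wt (φ (0, 1)) = n := by
    rw [wt_phi, cnt_val, if_pos rfl, if_pos (by rw [ip_zero_left]; decide), if_pos rfl]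
  have wt_cases : ∀ x β, x ≠ 0 →
      wt (φ (x, β)) = 2^(2*u) ∨ wt (φ (x, β)) = 2^(2*u) + 2^u := by
    intro x β hx
    rw [wt_phi, cnt_val, if_neg hx]
    by_cases hb : β + 1 + ip x (v1 u) = Qf x
    · right; rw [if_pos hb, if_pos rfl]
    · left; rw [if_neg hb]
  have wt_w1 : wt (φ (v1 u, Qf (v1 u) + ip (v1 u) (v1 u))) = 2^(2*u) := by
    rw [wt_phi, cnt_val, if_neg (v1_ne_zero u), if_neg (zmod2_w1 _ _)]
  have wt_w2 : wt (φ (v1 u, Qf (v1 u) + ip (v1 u) (v1 u) + 1)) = 2^(2*u) + 2^u := by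
    rw [wt_phi, cnt_val, if_neg (v1_ne_zero u), if_pos (zmod2_w2 _ _), if_pos rfl]
  have phi_ne : ∀ p, wt (φ p) ≠ 0 → φ p ≠ 0 := by
    intro p h h0
    rw [h0, wt_zero] at h
    exact h rfl
  -- injectivity
  have phi_inj : Function.Injective φ := by
    rw [injective_iff_map_eq_zero]
    rintro ⟨x, β⟩ h
    by_cases hx : x = 0
    · subst hx
      have hi : (0:ℕ) < n := by omega
      have h0 := congrFun h ⟨0, hi⟩
      rw [hφapp, ip_zero_left, zero_add] at h0
      rw [Prod.ext_iff]
      exact ⟨rfl, h0⟩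
    · exfalso
      have hw : wt (φ (x, β)) = 0 := by rw [h, wt_zero]
      rcases wt_cases x β hx with hc | hc <;> omega
  -- rank
  have hrank : Module.finrank (ZMod 2) (LinearMap.range φ) = 2*(u+1)+1 := by
    rw [LinearMap.finrank_range_of_inj phi_inj]
    rw [Module.finrank_prod, Module.finrank_self, Module.finrank_pi_fintype]
    simp [Module.finrank_prod, Module.finrank_self]
    omega
  -- min dist
  have hmin : IsMinDist (↑(LinearMap.range φ) : Set (Fin n → ZMod 2)) (2^(2*u)) := by
    constructor
    · exact ⟨φ (v1 u, Qf (v1 u) + ip (v1 u) (v1 u)), hmem _,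
        phi_ne _ (by rw [wt_w1]; omega), wt_w1⟩
    · intro c hc hc0
      obtain ⟨x, β, rfl⟩ := hmem' c hc
      by_cases hx : x = 0
      · subst hx
        rcases zmod2_cases β with hβ | hβ
        · subst hβ
          exact absurd (map_zero φ) hc0
        · subst hβ
          rw [wt_n]; omega
      · rcases wt_cases x β hx with hc1 | hc1 <;> omega
  -- projectivity
  have hproj : IsProjective (↑(LinearMap.range φ) : Set (Fin n → ZMod 2)) := by
    intro xx hxx hxx0
    by_contra hlt
    push_neg at hlt
    set S := Finset.univ.filter (fun i => xx i ≠ 0) with hS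
    have hwtS : wt xx = S.card := by
      rw [wt, Nat.card_eq_fintype_card, Fintype.card_subtype]
    have hSne : S.Nonempty := by
      obtain ⟨i, hi⟩ := Function.ne_iff.mp hxx0
      exact ⟨i, by simp only [hS, Finset.mem_filter, Finset.mem_univ, true_and]; exact hi⟩
    have hsum : ∀ c ∈ (↑(LinearMap.range φ) : Set (Fin n → ZMod 2)), ∑ i ∈ S, c i = 0 := by
      intro c hc
      have h := hxx c hc
      rw [finsum_eq_sum_of_fintype] at h
      rw [← Finset.sum_filter_of_ne (p := fun i => xx i ≠ 0)
        (by intro i _ hne h0; exact hne (by rw [h0, zero_mul]))] at h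
      rw [← h]
      apply Finset.sum_congr rfl
      intro i hi
      have hxi : xx i = 1 := by
        rw [hS, Finset.mem_filter] at hi
        exact (zmod2_ne0 _).mp hi.2
      rw [hxi, one_mul]
    have hcard : S.card = 1 ∨ S.card = 2 := by
      have := Finset.card_pos.mpr hSne
      omega
    rcases hcard with h1 | h2
    · obtain ⟨i0, hS1⟩ := Finset.card_eq_one.mp h1
      have h := hsum (φ (0, 1)) (hmem _)
      rw [hS1, Finset.sum_singleton, hφapp, ip_zero_left, zero_add] at h
      exact one_ne_zero h
    · obtain ⟨a, b, hab, hS2⟩ := Finset.card_eq_two.mp h2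
      have hEd : ∀ y, ip y (E a).1 = ip y (E b).1 := by
        intro y
        have h := hsum (φ (y, 0)) (hmem _)
        rw [hS2, Finset.sum_pair hab, hφapp, hφapp, add_zero, add_zero] at h
        exact zmod2_eq_of_add _ _ h
      have hdd : (E a).1 ≠ (E b).1 := fun hh => hab (E.injective (Subtype.ext hh))
      obtain ⟨j, hj⟩ := Function.ne_iff.mp hdd
      have hj2 : ((E a).1 j).1 ≠ ((E b).1 j).1 ∨ ((E a).1 j).2 ≠ ((E b).1 j).2 := by
        by_contra hcon
        push_neg at hcon
        exact hj (Prod.ext hcon.1 hcon.2)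
      rcases hj2 with hj2 | hj2
      · apply hj2
        have h := hEd (delta j (1, 0))
        rw [ip_delta, ip_delta] at h
        simpa using h
      · apply hj2
        have h := hEd (delta j (0, 1))
        rw [ip_delta, ip_delta] at h
        simpa using h
  -- number of weights
  have hwc_ne : ∀ w : ℕ, (∃ c, c ∈ (↑(LinearMap.range φ) : Set (Fin n → ZMod 2)) ∧ wt c = w) →
      weightCount (↑(LinearMap.range φ) : Set (Fin n → ZMod 2)) w ≠ 0 := by
    intro w ⟨c, hc, hw⟩
    rw [weightCount]
    rw [Nat.card_ne_zero]
    exact ⟨⟨⟨c, hc, hw⟩⟩, inferInstance⟩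
  have hWset : {i : ℕ | 1 ≤ i ∧ weightCount (↑(LinearMap.range φ) : Set (Fin n → ZMod 2)) i ≠ 0}
      = {2^(2*u), 2^(2*u) + 2^u, n} := by
    ext i
    simp only [Set.mem_setOf_eq, Set.mem_insert_iff, Set.mem_singleton_iff]
    constructor
    · rintro ⟨h1, h2⟩
      rw [weightCount, Nat.card_ne_zero] at h2
      obtain ⟨⟨⟨c, hc, hwc⟩⟩, -⟩ := h2
      obtain ⟨x, β, rfl⟩ := hmem' c hc
      by_cases hx : x = 0
      · subst hx
        rcases zmod2_cases β with hβ | hβ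
        · subst hβ
          rw [hφ0, wt_zero] at hwc
          omega
        · subst hβ
          rw [wt_n] at hwc
          right; right; omega
      · rcases wt_cases x β hx with hc1 | hc1
        · left; omega
        · right; left; omega
    · rintro (rfl | rfl | rfl)
      · exact ⟨by omega, hwc_ne _ ⟨_, hmem _, wt_w1⟩⟩
      · exact ⟨by omega, hwc_ne _ ⟨_, hmem _, wt_w2⟩⟩
      · exact ⟨by omega, hwc_ne _ ⟨_, hmem _, wt_n⟩⟩
  have hnum : numNonzeroWeights (↑(LinearMap.range φ) : Set (Fin n → ZMod 2)) = 3 := by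
    rw [numNonzeroWeights, hWset, Nat.card_coe_set_eq]
    rw [Set.ncard_eq_three]
    exact ⟨_, _, _, by omega, by omega, by omega, rfl⟩
  -- A_n = 1
  have huniq : ∀ c ∈ (↑(LinearMap.range φ) : Set (Fin n → ZMod 2)), wt c = n → c = φ (0, 1) := by
    intro c hc hwc
    obtain ⟨x, β, rfl⟩ := hmem' c hc
    by_cases hx : x = 0
    · subst hx
      rcases zmod2_cases β with hβ | hβ
      · subst hβ
        rw [hφ0, wt_zero] at hwc
        omega
      · subst hβ; rfl
    · rcases wt_cases x β hx with hc1 | hc1 <;> omega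
  have hwcn : weightCount (↑(LinearMap.range φ) : Set (Fin n → ZMod 2)) n = 1 := by
    rw [weightCount, Nat.card_eq_one_iff_unique]
    constructor
    · constructor
      rintro ⟨c, hc, hwc⟩ ⟨c', hc', hwc'⟩
      apply Subtype.ext
      show c = c'
      rw [huniq c hc hwc, huniq c' hc' hwc']
    · exact ⟨⟨φ (0, 1), hmem _, wt_n⟩⟩
  exact ⟨LinearMap.range φ, hrank, hmin, hproj, hnum, hwcn⟩

theorem exists_three_weight_code_plus (m : ℕ) (hm : 7 ≤ m) (hmod4 : m % 4 = 3) :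
    ∃ C : Submodule (ZMod 2) (Fin (2 ^ (m - 2) + 2 ^ ((m - 3) / 2)) → ZMod 2),
      Module.finrank (ZMod 2) C = m ∧
      IsMinDist (C : Set (Fin (2 ^ (m - 2) + 2 ^ ((m - 3) / 2)) → ZMod 2)) (2 ^ (m - 3)) ∧
      IsProjective (C : Set (Fin (2 ^ (m - 2) + 2 ^ ((m - 3) / 2)) → ZMod 2)) ∧
      numNonzeroWeights (C : Set (Fin (2 ^ (m - 2) + 2 ^ ((m - 3) / 2)) → ZMod 2)) = 3 ∧
      weightCount (C : Set (Fin (2 ^ (m - 2) + 2 ^ ((m - 3) / 2)) → ZMod 2))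
        (2 ^ (m - 2) + 2 ^ ((m - 3) / 2)) = 1 := by
  obtain ⟨u, hu⟩ : ∃ u, u = (m - 3) / 2 := ⟨_, rfl⟩
  rw [← hu]
  rw [show m - 2 = 2*u+1 from by omega]
  rw [show m - 3 = 2*u from by omega]
  rw [show m = 2*(u+1)+1 from by omega]
  exact master u
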